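/- Define sequences of complex numbers c : ℤ₂ⁿ → ℂ and c' : ℤ₂ⁿ → ℂ recursively by: for n = 1, c(0) = 1, c(1) = 0, c'(0) = 0, c'(1) = 1; and for any v ∈ ℤ₂^{n-1} and vₙ ∈ ℤ₂, (c(v,0), c'(v,0)) = ((c(v)+c'(v))/2, (-c(v)+c'(v))/2) and (c(v,1), c'(v,1)) = ((c(v)-c'(v))/2, (c(v)+c'(v))/2). Then for all v ∈ ℤ₂ⁿ, c(v) = (1/2)·[((λ₂/√2)^{n-1})·λ₁^{2|v|} + ((λ₁/√2)^{n-1})·λ₂^{2|v|}], where λ₁ = e^{iπ/4}, λ₂ = e^{-iπ/4}, and |v| = v₁+⋯+vₙ. -/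
import Mathlib


open Complex Finset

/-- The recursively defined Mermin coefficients `c, c'` on binary strings
(`c n v` is the coefficient indexed by `v ∈ ℤ₂^{n+1}`) satisfy the closed formula
`c(v) = (1/2)·[(λ₂/√2)^{n-1} λ₁^{2|v|} + (λ₁/√2)^{n-1} λ₂^{2|v|}]`
with `λ₁ = e^{iπ/4}`, `λ₂ = e^{-iπ/4}`. -/
theorem stmt2
    (c c' : (n : ℕ) → ((Fin (n + 1) → Fin 2) → ℂ))
    (hc1 : ∀ v : Fin 1 → Fin 2, c 0 v = if v 0 = 0 then 1 else 0)
    (hc1' : ∀ v : Fin 1 → Fin 2, c' 0 v = if v 0 = 0 then 0 else 1)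
    (hrec0 : ∀ (n : ℕ) (v : Fin (n + 1) → Fin 2),
      c (n + 1) (Fin.snoc v 0) = (c n v + c' n v) / 2 ∧
      c' (n + 1) (Fin.snoc v 0) = (-c n v + c' n v) / 2)
    (hrec1 : ∀ (n : ℕ) (v : Fin (n + 1) → Fin 2),
      c (n + 1) (Fin.snoc v 1) = (c n v - c' n v) / 2 ∧
      c' (n + 1) (Fin.snoc v 1) = (c n v + c' n v) / 2) :
    ∀ (n : ℕ) (v : Fin (n + 1) → Fin 2),
      c n v = (1 / 2) *
        ((((1 - I) / (Real.sqrt 2 : ℂ)) / (Real.sqrt 2 : ℂ)) ^ n *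
            ((1 + I) / (Real.sqrt 2 : ℂ)) ^ (2 * ∑ i, (v i : ℕ)) +
          (((1 + I) / (Real.sqrt 2 : ℂ)) / (Real.sqrt 2 : ℂ)) ^ n *
            ((1 - I) / (Real.sqrt 2 : ℂ)) ^ (2 * ∑ i, (v i : ℕ))) := by
  have hr2 : (Real.sqrt 2 : ℂ) * (Real.sqrt 2 : ℂ) = 2 := by
    rw [← Complex.ofReal_mul, Real.mul_self_sqrt (by norm_num : (0:ℝ) ≤ 2)]
    norm_num
  have key : ∀ (n : ℕ) (v : Fin (n + 1) → Fin 2),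
      c n v = (1/2) * (((1 - I)/2) ^ n * I ^ (∑ i, (v i : ℕ))
          + ((1 + I)/2) ^ n * (-I) ^ (∑ i, (v i : ℕ))) ∧
      c' n v = (-I/2) * (((1 - I)/2) ^ n * I ^ (∑ i, (v i : ℕ))
          - ((1 + I)/2) ^ n * (-I) ^ (∑ i, (v i : ℕ))) := by
    intro n
    induction n with
    | zero =>
      intro v
      rcases eq_or_ne (v 0) 0 with h | h
      · rw [hc1 v, hc1' v, if_pos h, if_pos h, Fin.sum_univ_one, h]
        norm_num
      · have h1 : v 0 = 1 := by omega
        rw [hc1 v, hc1' v, if_neg h, if_neg h, Fin.sum_univ_one, h1]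
        simp only [Fin.val_one, pow_one, pow_zero]
        constructor
        · ring
        · linear_combination Complex.I_sq
    | succ n ih =>
      intro v
      obtain ⟨hcw, hcw'⟩ := ih (Fin.init v)
      rcases eq_or_ne (v (Fin.last (n + 1))) 0 with h | h
      · have hv0 : v = Fin.snoc (Fin.init v) 0 := by
          rw [← h]; exact (Fin.snoc_init_self v).symm
        obtain ⟨e1, e2⟩ := hrec0 n (Fin.init v)
        have hs : ∑ i, ((Fin.snoc (Fin.init v) (0 : Fin 2)) i : ℕ)
            = ∑ i, ((Fin.init v) i : ℕ) := by
          simp [Fin.sum_univ_castSucc]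
        rw [hv0]
        constructor
        · rw [e1, hcw, hcw', hs]
          ring
        · rw [e2, hcw, hcw', hs]
          linear_combination (-(((1 - I)/2) ^ n * I ^ (∑ i, ((Fin.init v) i : ℕ))
            + ((1 + I)/2) ^ n * (-I) ^ (∑ i, ((Fin.init v) i : ℕ))) / 4) * Complex.I_sq
      · have h1 : v (Fin.last (n + 1)) = 1 := by omega
        have hv1 : v = Fin.snoc (Fin.init v) 1 := by
          rw [← h1]; exact (Fin.snoc_init_self v).symm
        obtain ⟨e1, e2⟩ := hrec1 n (Fin.init v)
        have hs : ∑ i, ((Fin.snoc (Fin.init v) (1 : Fin 2)) i : ℕ)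
            = (∑ i, ((Fin.init v) i : ℕ)) + 1 := by
          simp [Fin.sum_univ_castSucc]
        rw [hv1]
        constructor
        · rw [e1, hcw, hcw', hs]
          linear_combination ((((1 - I)/2) ^ n * I ^ (∑ i, ((Fin.init v) i : ℕ))
            + ((1 + I)/2) ^ n * (-I) ^ (∑ i, ((Fin.init v) i : ℕ))) / 4) * Complex.I_sq
        · rw [e2, hcw, hcw', hs]
          linear_combination ((((1 - I)/2) ^ n * I ^ (∑ i, ((Fin.init v) i : ℕ)) * (1 - I)
            + ((1 + I)/2) ^ n * (-I) ^ (∑ i, ((Fin.init v) i : ℕ)) * (1 + I)) / 4) * Complex.I_sq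
  intro n v
  have hA : ((1 + I) / (Real.sqrt 2 : ℂ)) ^ (2 * ∑ i, (v i : ℕ))
      = I ^ (∑ i, (v i : ℕ)) := by
    rw [pow_mul]
    congr 1
    rw [div_pow, sq, sq, hr2]
    linear_combination Complex.I_sq / 2
  have hB : ((1 - I) / (Real.sqrt 2 : ℂ)) ^ (2 * ∑ i, (v i : ℕ))
      = (-I) ^ (∑ i, (v i : ℕ)) := by
    rw [pow_mul]
    congr 1
    rw [div_pow, sq, sq, hr2]
    linear_combination Complex.I_sq / 2
  rw [(key n v).1, hA, hB, div_div, div_div, hr2]
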